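/- Let C ⊂ V be a proper closed convex full-dimensional cone, s > 1, and f ∈ HConc_s(C) continuously differentiable on C°, with D(v) = Df(v)/s. Let C_T ⊂ C° be a nonempty convex subcone. If f satisfies Teissier proportionality on C_T, then f is strictly log concave on C_T: for any non-proportional v, x ∈ C_T, f(v+x)^{1/s} > f(v)^{1/s} + f(x)^{1/s}. -/

import Mathlib

open Set Topology

variable {V : Type*} [NormedAddCommGroup V] [NormedSpace ℝ V] [FiniteDimensional ℝ V]

/-- The dual cone of `C` inside the continuous dual of `V`. -/
def dualCone (C : Set V) : Set (V →L[ℝ] ℝ) := {w | ∀ v ∈ C, 0 ≤ w v}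

/-- The polar transform of a weight-`s` homogeneous function `f` on the cone `C`. -/
noncomputable def polar (C : Set V) (s : ℝ) (f : V → ℝ) (w : V →L[ℝ] ℝ) : ℝ :=
  sInf ((fun v => (w v / f v ^ (1/s)) ^ (s/(s-1))) '' interior C)

theorem teissier_implies_strict_log_concave
    (C : Set V) (hCcl : IsClosed C) (hCcv : Convex ℝ C)
    (hCcone : ∀ v ∈ C, ∀ t : ℝ, 0 ≤ t → t • v ∈ C)
    (hCproper : ∀ v ∈ C, -v ∈ C → v = 0)
    (hCfull : (interior C).Nonempty)
    (s : ℝ) (hs : 1 < s) (f : V → ℝ)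
    (hfusc : UpperSemicontinuousOn f C)
    (hf0 : ∀ v ∈ C, 0 ≤ f v)
    (hfhom : ∀ t : ℝ, 0 ≤ t → ∀ v ∈ C, f (t • v) = t ^ s * f v)
    (hfpos : ∀ v ∈ interior C, 0 < f v)
    (hfconc : ∀ v ∈ C, ∀ x ∈ C, f v ^ (1/s) + f x ^ (1/s) ≤ f (v + x) ^ (1/s))
    (hfC1 : ContDiffOn ℝ 1 f (interior C))
    (T : Set V) (hTsub : T ⊆ interior C) (hTne : T.Nonempty)
    (hTcone : ∀ v ∈ T, ∀ t : ℝ, 0 < t → t • v ∈ T)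
    (hTconv : Convex ℝ T)
    (hteissier : ∀ v ∈ T, ∀ x ∈ T,
      fderiv ℝ f v x / s = f v ^ ((s-1)/s) * f x ^ (1/s) → ∃ t : ℝ, x = t • v) :
    ∀ v ∈ T, ∀ x ∈ T, (¬ ∃ t : ℝ, x = t • v) →
      f v ^ (1/s) + f x ^ (1/s) < f (v + x) ^ (1/s) := by

  intro v hv x hx hprop
  have hsne : s ≠ 0 := by positivity
  have hvC : v ∈ C := interior_subset (hTsub hv)
  have hxC : x ∈ C := interior_subset (hTsub hx)
  have hCadd : ∀ a ∈ C, ∀ b ∈ C, a + b ∈ C := by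
    intro a ha b hb
    have hmid := hCcv ha hb (by norm_num : (0:ℝ) ≤ 1/2) (by norm_num : (0:ℝ) ≤ 1/2)
      (by norm_num)
    have h2 := hCcone _ hmid 2 (by norm_num)
    have : (2:ℝ) • ((1/2 : ℝ) • a + (1/2 : ℝ) • b) = a + b := by
      rw [smul_add, smul_smul, smul_smul]; norm_num
    rwa [this] at h2
  have hFhom : ∀ t : ℝ, 0 ≤ t → ∀ u ∈ C, f (t • u) ^ (1/s) = t * f u ^ (1/s) := by
    intro t ht u hu
    rw [hfhom t ht u hu, Real.mul_rpow (Real.rpow_nonneg ht s) (hf0 u hu)]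
    congr 1
    rw [← Real.rpow_mul ht, mul_one_div_cancel hsne, Real.rpow_one]
  have hle := hfconc v hvC x hxC
  rcases lt_or_eq_of_le hle with h | heq
  · exact h
  exfalso
  -- heq : f v ^ (1/s) + f x ^ (1/s) = f (v+x) ^ (1/s)
  set w := v + x with hw
  have hwT : w ∈ T := by
    have hmid := hTconv hv hx (by norm_num : (0:ℝ) ≤ 1/2) (by norm_num : (0:ℝ) ≤ 1/2)
      (by norm_num)
    have h2 := hTcone _ hmid 2 (by norm_num)
    have h3 : (2:ℝ) • ((1/2 : ℝ) • v + (1/2 : ℝ) • x) = v + x := by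
      rw [smul_add, smul_smul, smul_smul]; norm_num
    rwa [h3] at h2
  have hwC : w ∈ C := hCadd v hvC x hxC
  have hfw : 0 < f w := hfpos w (hTsub hwT)
  have hkey : ∀ t : ℝ, 0 ≤ t →
      f (w + t • x) ^ (1/s) = f w ^ (1/s) + t * f x ^ (1/s) := by
    intro t ht
    have h1t : (0:ℝ) ≤ 1 + t := by linarith
    have hwtx : w + t • x = v + (1+t) • x := by
      rw [hw, add_smul, one_smul]; abel
    have hxC' : (1+t) • x ∈ C := hCcone x hxC _ h1t
    have hA : f v ^ (1/s) + (1+t) * f x ^ (1/s) ≤ f (v + (1+t) • x) ^ (1/s) := by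
      have h := hfconc v hvC _ hxC'
      rwa [hFhom _ h1t x hxC] at h
    have hB : f (v + (1+t) • x) ^ (1/s) ≤ f v ^ (1/s) + (1+t) * f x ^ (1/s) := by
      have hmem1 : v + (1+t) • x ∈ C := hCadd v hvC _ hxC'
      have hmem2 : t • v ∈ C := hCcone v hvC t ht
      have hsum := hfconc _ hmem1 _ hmem2
      have hcomb : (v + (1+t) • x) + t • v = (1+t) • w := by
        rw [hw]; module
      rw [hcomb, hFhom _ h1t w hwC, hFhom _ ht v hvC, ← heq] at hsum
      nlinarith [hsum]
    have hweq : f w ^ (1/s) = f v ^ (1/s) + f x ^ (1/s) := heq.symm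
    rw [hwtx, hweq]
    nlinarith [hA, hB]
  -- derivative computation
  have hdiff : DifferentiableAt ℝ f w :=
    (hfC1.differentiableOn one_ne_zero).differentiableAt (isOpen_interior.mem_nhds (hTsub hwT))
  have hline : HasDerivAt (fun t : ℝ => w + t • x) x 0 := by
    simpa using ((hasDerivAt_id (0:ℝ)).smul_const x).const_add w
  have h0 : w + (0:ℝ) • x = w := by simp
  have hinner : HasDerivAt (fun t : ℝ => f (w + t • x)) (fderiv ℝ f w x) 0 := by
    have hfd0 : HasFDerivAt f (fderiv ℝ f w) (w + (0:ℝ) • x) := by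
      rw [h0]; exact hdiff.hasFDerivAt
    exact hfd0.comp_hasDerivAt 0 hline
  have hrpow : HasDerivAt (fun y : ℝ => y ^ (1/s)) (1/s * f w ^ (1/s - 1)) (f w) :=
    Real.hasDerivAt_rpow_const (Or.inl (ne_of_gt hfw))
  have hg : HasDerivAt (fun t : ℝ => f (w + t • x) ^ (1/s))
      (1/s * f w ^ (1/s - 1) * fderiv ℝ f w x) 0 := by
    have hrpow0 : HasDerivAt (fun y : ℝ => y ^ (1/s)) (1/s * f w ^ (1/s - 1))
        (f (w + (0:ℝ) • x)) := by rw [h0]; exact hrpow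
    have := hrpow0.comp 0 hinner
    exact this
  have hlinW : HasDerivWithinAt (fun t : ℝ => f (w + t • x) ^ (1/s))
      (f x ^ (1/s)) (Ici (0:ℝ)) 0 := by
    have hl : HasDerivAt (fun t : ℝ => f w ^ (1/s) + t * f x ^ (1/s)) (f x ^ (1/s)) 0 := by
      simpa using ((hasDerivAt_id (0:ℝ)).mul_const (f x ^ (1/s))).const_add (f w ^ (1/s))
    exact (hl.hasDerivWithinAt).congr (fun y hy => hkey y hy)
      (by simpa using hkey 0 le_rfl)
  have heqd : 1/s * f w ^ (1/s - 1) * fderiv ℝ f w x = f x ^ (1/s) := by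
    have h1 := (hg.hasDerivWithinAt (s := Ici (0:ℝ))).derivWithin (uniqueDiffOn_Ici 0 0 self_mem_Ici)
    have h2 := hlinW.derivWithin (uniqueDiffOn_Ici 0 0 self_mem_Ici)
    rw [← h1]; exact h2
  have hDw : fderiv ℝ f w x / s = f w ^ ((s-1)/s) * f x ^ (1/s) := by
    have h1 : f w ^ ((s-1)/s) * f w ^ (1/s - 1) = 1 := by
      rw [← Real.rpow_add hfw]
      have : (s-1)/s + (1/s - 1) = 0 := by field_simp; ring
      rw [this, Real.rpow_zero]
    have h2 : f w ^ ((s-1)/s) * (1/s * f w ^ (1/s - 1) * fderiv ℝ f w x)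
        = f w ^ ((s-1)/s) * f w ^ (1/s - 1) * (fderiv ℝ f w x / s) := by
      field_simp
    rw [heqd] at h2
    rw [h1, one_mul] at h2
    exact h2.symm
  obtain ⟨t, hxt⟩ := hteissier w hwT x hx hDw
  by_cases ht1 : t = 1
  · rw [ht1, one_smul, hw] at hxt
    have hv0 : v = 0 := by
      have : v + x = 0 + x := by rw [zero_add, ← hxt]
      exact add_right_cancel this
    have hfv0 : f v = 0 := by
      have h := hfhom 0 le_rfl v hvC
      rw [zero_smul, Real.zero_rpow hsne, zero_mul] at h
      rw [hv0]; exact h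
    have := hfpos v (hTsub hv)
    rw [hfv0] at this; exact lt_irrefl 0 this
  · apply hprop
    refine ⟨(1 - t)⁻¹ * t, ?_⟩
    have htne : (1:ℝ) - t ≠ 0 := sub_ne_zero.mpr (Ne.symm ht1)
    have h1 : (1 - t) • x = t • v := by
      have hx' : x = t • v + t • x := by rw [← smul_add, ← hw]; exact hxt
      have h2 : t • v = x - t • x := eq_sub_of_add_eq hx'.symm
      rw [sub_smul, one_smul]
      exact h2.symm
    calc x = (1 - t)⁻¹ • ((1 - t) • x) := by rw [smul_smul, inv_mul_cancel₀ htne, one_smul]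
      _ = (1 - t)⁻¹ • (t • v) := by rw [h1]
      _ = ((1 - t)⁻¹ * t) • v := by rw [smul_smul]
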